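/- Let C=(A,B,≺) be a one-factor two-chain cover with elements a_1≺...≺a_k in A and b_1≺...≺b_{n-k} in B, and let (V,W)=Γ(C) be the associated non-hitting walks. Let t_V(i) (resp. t_W(i)) be the first time V (resp. W) has taken i up-steps. Then the number of elements incomparable to a_i equals t_W(i) − t_V(i). -/

import Mathlib

open scoped Classical

/-- A two-chain cover on `[n]`: a (strict) partial order on `Fin n` whose ground set is
partitioned into two chains, `A` and its complement `B = Aᶜ`. -/
structure TwoChainCover (n : ℕ) where
  lt : Fin n → Fin n → Prop
  irrefl : ∀ x, ¬lt x x
  trans : ∀ x y z, lt x y → lt y z → lt x z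
  A : Finset (Fin n)
  chainA : ∀ x ∈ A, ∀ y ∈ A, x ≠ y → lt x y ∨ lt y x
  chainB : ∀ x y : Fin n, x ∉ A → y ∉ A → x ≠ y → lt x y ∨ lt y x

namespace TwoChainCover

variable {n : ℕ}

/-- The incomparability graph of a two-chain cover: `x ∼ y` iff `x ≠ y` and `x, y` are
incomparable in the partial order. -/
def incompGraph (C : TwoChainCover n) : SimpleGraph (Fin n) where
  Adj x y := x ≠ y ∧ ¬C.lt x y ∧ ¬C.lt y x
  symm := by refine ⟨?_⟩; intro x y h; exact ⟨h.1.symm, h.2.2, h.2.1⟩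
  loopless := by refine ⟨?_⟩; intro x h; exact h.1 rfl

/-- A two-chain cover has one factor if its incomparability graph is connected. -/
def OneFactor (C : TwoChainCover n) : Prop := C.incompGraph.Connected

/-- `(λ, δ)` is the greedy pair of linear orders of the cover `C`: both are linear
extensions of the partial order (here given as equivs `Fin n ≃ Fin n`, where `λ i` is the
element in position `i`, so that `λ.symm` records ranks), and every incomparable pair
`a ∈ A`, `b ∈ B` is resolved as `a` before `b` in `λ` and `b` before `a` in `δ`. -/
def GreedyPair (C : TwoChainCover n) (lam del : Fin n ≃ Fin n) : Prop :=
  (∀ x y, C.lt x y → lam.symm x < lam.symm y) ∧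
  (∀ x y, C.lt x y → del.symm x < del.symm y) ∧
  (∀ a ∈ C.A, ∀ b : Fin n, b ∉ C.A → ¬C.lt a b → ¬C.lt b a →
    lam.symm a < lam.symm b ∧ del.symm b < del.symm a)

/-- The walk associated with a linear order `e` (so `Γ(C) = (walk C λ, walk C δ)`): at
step `i + 1` the walk goes up if the element in position `i` lies in the chain `A`, and
down otherwise. -/
def walk (C : TwoChainCover n) (e : Fin n ≃ Fin n) : ℕ → ℤ := fun t =>
  ∑ i ∈ Finset.univ.filter (fun i : Fin n => (i : ℕ) < t),
    (if e i ∈ C.A then (1 : ℤ) else -1)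

/-- The incomparability window of `c`: the number of elements incomparable to `c`. -/
noncomputable def window (C : TwoChainCover n) (c : Fin n) : ℕ :=
  (Finset.univ.filter fun y : Fin n => y ≠ c ∧ ¬C.lt y c ∧ ¬C.lt c y).card

/-- `τ(c)`: the number of elements `y ⪯ c`. -/
noncomputable def tau (C : TwoChainCover n) (c : Fin n) : ℕ :=
  (Finset.univ.filter fun y : Fin n => C.lt y c ∨ y = c).card

/-- The rank of `a` within the chain `A` (so `a = a_i` with `i = rankA C a`). -/
noncomputable def rankA (C : TwoChainCover n) (a : Fin n) : ℕ :=
  (Finset.univ.filter fun y : Fin n => y ∈ C.A ∧ C.lt y a).card + 1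

/-- The rank of `b` within the chain `B = Aᶜ` (so `b = b_j` with `j = rankB C b`). -/
noncomputable def rankB (C : TwoChainCover n) (b : Fin n) : ℕ :=
  (Finset.univ.filter fun y : Fin n => y ∉ C.A ∧ C.lt y b).card + 1

/-- The first time the walk associated with `e` has taken `i` up-steps. -/
noncomputable def tUp (C : TwoChainCover n) (e : Fin n ≃ Fin n) (i : ℕ) : ℕ :=
  sInf {t : ℕ | i ≤ (Finset.univ.filter fun j : Fin n => (j : ℕ) < t ∧ e j ∈ C.A).card}

/-- The first time the walk associated with `e` has taken `j` down-steps. -/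
noncomputable def tDown (C : TwoChainCover n) (e : Fin n ≃ Fin n) (j : ℕ) : ℕ :=
  sInf {t : ℕ | j ≤ (Finset.univ.filter fun i : Fin n => (i : ℕ) < t ∧ e i ∉ C.A).card}

end TwoChainCover


namespace TwoChainCoverAux

open Finset TwoChainCover

variable {n : ℕ}

lemma card_filter_symm_lt (e : Fin n ≃ Fin n) (p : Fin n) :
    (univ.filter fun y : Fin n => e.symm y < p).card = (p : ℕ) := by
  have h : (univ.filter fun y : Fin n => e.symm y < p) = Finset.image e (Finset.Iio p) := by
    ext y
    simp only [mem_filter, mem_univ, true_and, Finset.mem_image, Finset.mem_Iio]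
    constructor
    · intro h; exact ⟨e.symm y, h, by simp⟩
    · rintro ⟨j, hj, rfl⟩; simpa using hj
  rw [h, Finset.card_image_of_injective _ e.injective, Fin.card_Iio]

lemma count_eq (C : TwoChainCover n) (e : Fin n ≃ Fin n)
    (hext : ∀ x y, C.lt x y → e.symm x < e.symm y)
    (a : Fin n) (ha : a ∈ C.A) :
    (Finset.univ.filter fun j : Fin n => (j : ℕ) < (e.symm a : ℕ) ∧ e j ∈ C.A).card
      = (Finset.univ.filter fun y : Fin n => y ∈ C.A ∧ C.lt y a).card := by
  have h : (Finset.univ.filter fun j : Fin n => (j : ℕ) < (e.symm a : ℕ) ∧ e j ∈ C.A)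
      = Finset.image e.symm (Finset.univ.filter fun y : Fin n => y ∈ C.A ∧ C.lt y a) := by
    ext j
    simp only [mem_filter, mem_univ, true_and, Finset.mem_image]
    constructor
    · rintro ⟨hj, hjA⟩
      refine ⟨e j, ⟨hjA, ?_⟩, by simp⟩
      have hne : e j ≠ a := by
        rintro h
        rw [← h] at hj; simp at hj
      rcases C.chainA _ hjA _ ha hne with h | h
      · exact h
      · exact absurd (hext _ _ h) (by simp; omega)
    · rintro ⟨y, ⟨hyA, hlt⟩, rfl⟩
      have := hext _ _ hlt
      exact ⟨by exact_mod_cast this, by simpa using hyA⟩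
  rw [h, Finset.card_image_of_injective _ e.symm.injective]

lemma tUp_eq (C : TwoChainCover n) (e : Fin n ≃ Fin n)
    (hext : ∀ x y, C.lt x y → e.symm x < e.symm y)
    (a : Fin n) (ha : a ∈ C.A) :
    C.tUp e (C.rankA a) = (e.symm a : ℕ) + 1 := by
  set p : Fin n := e.symm a with hp
  have hcount := count_eq C e hext a ha
  have hmem : (C.rankA a) ≤ (Finset.univ.filter fun j : Fin n =>
      (j : ℕ) < (p : ℕ) + 1 ∧ e j ∈ C.A).card := by
    have hset : (Finset.univ.filter fun j : Fin n => (j : ℕ) < (p : ℕ) + 1 ∧ e j ∈ C.A)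
        = insert p (Finset.univ.filter fun j : Fin n => (j : ℕ) < (p : ℕ) ∧ e j ∈ C.A) := by
      ext j
      simp only [mem_filter, mem_univ, true_and, Finset.mem_insert]
      constructor
      · rintro ⟨hj, hjA⟩
        rcases Nat.lt_succ_iff_lt_or_eq.mp hj with h | h
        · exact Or.inr ⟨h, hjA⟩
        · exact Or.inl (Fin.ext h)
      · rintro (rfl | ⟨hj, hjA⟩)
        · exact ⟨Nat.lt_succ_self _, by simp [hp, ha]⟩
        · exact ⟨Nat.lt_succ_of_lt hj, hjA⟩
    rw [hset, Finset.card_insert_of_notMem (by simp), hcount]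
    simp [TwoChainCover.rankA]
  have hnot : ∀ t : ℕ, t ≤ (p : ℕ) →
      (Finset.univ.filter fun j : Fin n => (j : ℕ) < t ∧ e j ∈ C.A).card < C.rankA a := by
    intro t ht
    have hsub : (Finset.univ.filter fun j : Fin n => (j : ℕ) < t ∧ e j ∈ C.A)
        ⊆ (Finset.univ.filter fun j : Fin n => (j : ℕ) < (p : ℕ) ∧ e j ∈ C.A) := by
      intro j hj
      simp only [mem_filter, mem_univ, true_and] at hj ⊢
      exact ⟨lt_of_lt_of_le hj.1 ht, hj.2⟩
    calc (Finset.univ.filter fun j : Fin n => (j : ℕ) < t ∧ e j ∈ C.A).card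
        ≤ _ := Finset.card_le_card hsub
      _ < C.rankA a := by rw [hcount]; simp [TwoChainCover.rankA]
  rw [TwoChainCover.tUp]
  have hne : Set.Nonempty {t : ℕ | C.rankA a ≤ (Finset.univ.filter fun j : Fin n =>
      (j : ℕ) < t ∧ e j ∈ C.A).card} := ⟨(p : ℕ) + 1, hmem⟩
  have hmem2 := Nat.sInf_mem hne
  refine le_antisymm (Nat.sInf_le hmem) ?_
  by_contra hc
  push_neg at hc
  exact absurd hmem2 (not_le.mpr (hnot _ (by omega)))

lemma symm_val_lam (C : TwoChainCover n) (lam del : Fin n ≃ Fin n)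
    (hg : C.GreedyPair lam del) (a : Fin n) (ha : a ∈ C.A) :
    (lam.symm a : ℕ) = (Finset.univ.filter fun y : Fin n => C.lt y a).card := by
  rw [← card_filter_symm_lt lam (lam.symm a)]
  congr 1
  ext y
  simp only [mem_filter, mem_univ, true_and]
  constructor
  · intro h
    have hne : y ≠ a := by rintro rfl; exact absurd h (lt_irrefl _)
    by_contra hlt
    have hlta : ¬ C.lt a y := fun hlta => absurd (hg.1 _ _ hlta) (not_lt.mpr (le_of_lt h))
    have hyB : y ∉ C.A := by
      intro hyA
      rcases C.chainA _ hyA _ ha hne with h' | h'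
      · exact hlt h'
      · exact hlta h'
    exact absurd ((hg.2.2 a ha y hyB hlta hlt).1) (not_lt.mpr (le_of_lt h))
  · exact hg.1 _ a

lemma symm_val_del (C : TwoChainCover n) (lam del : Fin n ≃ Fin n)
    (hg : C.GreedyPair lam del) (a : Fin n) (ha : a ∈ C.A) :
    (del.symm a : ℕ) = (Finset.univ.filter fun y : Fin n => C.lt y a).card + C.window a := by
  have key : (Finset.univ.filter fun y : Fin n => del.symm y < del.symm a)
      = (Finset.univ.filter fun y : Fin n => C.lt y a) ∪
        (Finset.univ.filter fun y : Fin n => y ≠ a ∧ ¬C.lt y a ∧ ¬C.lt a y) := by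
    ext y
    simp only [mem_filter, mem_univ, true_and, Finset.mem_union]
    constructor
    · intro h
      have hne : y ≠ a := by rintro rfl; exact absurd h (lt_irrefl _)
      by_cases hlt : C.lt y a
      · exact Or.inl hlt
      · refine Or.inr ⟨hne, hlt, fun hlta => ?_⟩
        exact absurd (hg.2.1 _ _ hlta) (not_lt.mpr (le_of_lt h))
    · rintro (h | ⟨hne, h1, h2⟩)
      · exact hg.2.1 _ _ h
      · have hyB : y ∉ C.A := by
          intro hyA
          rcases C.chainA _ hyA _ ha hne with h' | h'
          · exact h1 h'
          · exact h2 h'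
        exact (hg.2.2 a ha y hyB h2 h1).2
  have hdisj : Disjoint (Finset.univ.filter fun y : Fin n => C.lt y a)
      (Finset.univ.filter fun y : Fin n => y ≠ a ∧ ¬C.lt y a ∧ ¬C.lt a y) := by
    rw [Finset.disjoint_filter]
    intro y _ h h'
    exact h'.2.1 h
  rw [← card_filter_symm_lt del (del.symm a), key, Finset.card_union_of_disjoint hdisj,
    TwoChainCover.window]

end TwoChainCoverAux

open TwoChainCover in
/-- Let `C = (A, B, ≺)` be a one-factor two-chain cover with greedy pair `(λ, δ)` and
associated non-hitting walks `(V, W) = (walk C λ, walk C δ)`.  For `a = a_i` the `i`-th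
smallest element of `A`, the number of elements incomparable to `a_i` equals
`t_W(i) - t_V(i)`, where `t_V(i)` (resp. `t_W(i)`) is the first time `V` (resp. `W`) has
taken `i` up-steps. -/
theorem window_eq_tW_sub_tV (n : ℕ) (C : TwoChainCover n)
    (lam del : Fin n ≃ Fin n) (h1 : C.OneFactor) (hg : C.GreedyPair lam del) :
    ∀ a ∈ C.A,
      (C.window a : ℤ) = (C.tUp del (C.rankA a) : ℤ) - (C.tUp lam (C.rankA a) : ℤ) := by
  intro a ha
  have hV := TwoChainCoverAux.tUp_eq C lam hg.1 a ha
  have hW := TwoChainCoverAux.tUp_eq C del hg.2.1 a ha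
  have hlam := TwoChainCoverAux.symm_val_lam C lam del hg a ha
  have hdel := TwoChainCoverAux.symm_val_del C lam del hg a ha
  rw [hV, hW]
  push_cast
  omega
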